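/- If a countably infinite group Γ admits a non-trivial measure-preserving action all of whose non-trivial factors are faithful, then Γ contains no non-trivial finite normal subgroup. -/

import Mathlib

open MeasureTheory
open scoped ENNReal
open Classical

namespace Stmt13Aux

variable {Γ X : Type} [Group Γ] [MeasurableSpace X] [MulAction Γ X]

/-- Pushforward action of `Γ` on measures, defined to be trivial when the action maps are
not all measurable (so that the `MulAction` axioms can be proved unconditionally). -/
noncomputable def msmul (γ : Γ) (m : Measure X) : Measure X :=
  if ∀ γ' : Γ, Measurable (fun x : X => γ' • x) then m.map (fun x => γ • x) else m

theorem msmul_eq (h : ∀ γ' : Γ, Measurable (fun x : X => γ' • x)) (γ : Γ) (m : Measure X) :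
    msmul γ m = m.map (fun x => γ • x) := if_pos h

noncomputable def measureMulAction (Γ X : Type) [Group Γ] [MeasurableSpace X] [MulAction Γ X] :
    MulAction Γ (Measure X) where
  smul := msmul
  one_smul m := by
    show msmul 1 m = m
    unfold msmul
    split_ifs with h
    · simp
    · rfl
  mul_smul γ₁ γ₂ m := by
    show msmul (γ₁ * γ₂) m = msmul γ₁ (msmul γ₂ m)
    unfold msmul
    split_ifs with h
    · rw [Measure.map_map (h γ₁) (h γ₂)]
      congr 1
      ext x
      simp [Function.comp, mul_smul]
    · rfl

end Stmt13Aux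

open Stmt13Aux

/-- If a countably infinite group `Γ` admits a non-trivial measure-preserving action all of
whose non-trivial factors are faithful, then `Γ` contains no non-trivial finite normal
subgroup. -/
theorem stmt_13 {Γ X : Type} [Group Γ] [Countable Γ] [Infinite Γ]
    [MeasurableSpace X] [StandardBorelSpace X] [MulAction Γ X]
    (μ : Measure X) [IsProbabilityMeasure μ]
    (hmp : ∀ γ : Γ, MeasurePreserving (fun x => γ • x) μ μ)
    (hnontriv : ∀ x : X, μ ≠ Measure.dirac x)
    (hfactors : ∀ (Y : Type) [MeasurableSpace Y] [MulAction Γ Y] (ν : Measure Y),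
      IsProbabilityMeasure ν →
      (∀ γ : Γ, MeasurePreserving (fun y => γ • y) ν ν) →
      ∀ π : X → Y, Measurable π → Measure.map π μ = ν →
      (∀ γ : Γ, ∀ᵐ x ∂μ, π (γ • x) = γ • π x) →
      (∀ y : Y, ν ≠ Measure.dirac y) →
      ∀ γ : Γ, γ ≠ 1 → ν {y | γ • y = y} < 1) :
    ∀ N : Subgroup Γ, N.Normal → (N : Set Γ).Finite → N = ⊥ := by
  intro N hN hNfin
  by_contra hbot
  obtain ⟨n₀, hn₀N, hn₀⟩ : ∃ n ∈ N, n ≠ 1 := by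
    rw [Subgroup.eq_bot_iff_forall] at hbot
    push_neg at hbot
    exact hbot
  have hmeas : ∀ γ : Γ, Measurable (fun x : X => γ • x) := fun γ => (hmp γ).measurable
  -- faithfulness of the action on `X` itself (the identity factor)
  have hId : ∀ γ : Γ, γ ≠ 1 → μ {x | γ • x = x} < 1 := by
    intro γ hγ
    exact hfactors X μ inferInstance hmp id measurable_id Measure.map_id
      (fun γ => Filter.Eventually.of_forall fun x => rfl) hnontriv γ hγ
  classical
  set sF : Finset Γ := hNfin.toFinset with hsF
  have hmem : ∀ g : Γ, g ∈ sF ↔ g ∈ N := fun g => hNfin.mem_toFinset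
  have hone : (1 : Γ) ∈ sF := (hmem 1).2 N.one_mem
  set k : ℝ≥0∞ := (sF.card : ℝ≥0∞) with hk
  have hk0 : k ≠ 0 := by
    simp only [hk, Ne, Nat.cast_eq_zero, Finset.card_eq_zero]
    exact fun h => by simp [h] at hone
  have hktop : k ≠ ⊤ := by simp [hk]
  -- the orbit-averaging factor map
  set π : X → Measure X := fun x => k⁻¹ • ∑ n ∈ sF, Measure.dirac (n • x) with hπdef
  have hπapp : ∀ (x : X) (A : Set X), MeasurableSet A →
      π x A = k⁻¹ * ∑ n ∈ sF, A.indicator (1 : X → ℝ≥0∞) (n • x) := by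
    intro x A hA
    simp only [hπdef, Measure.smul_apply, Measure.finset_sum_apply, smul_eq_mul]
    congr 1
    exact Finset.sum_congr rfl fun n _ => Measure.dirac_apply' _ hA
  have hπmeas : Measurable π := by
    apply Measure.measurable_of_measurable_coe
    intro A hA
    have h : (fun x => π x A) =
        fun x => k⁻¹ * ∑ n ∈ sF, A.indicator (1 : X → ℝ≥0∞) (n • x) := by
      funext x; exact hπapp x A hA
    rw [h]
    exact (Finset.measurable_sum sF fun n _ =>
      (measurable_one.indicator hA).comp (hmeas n)).const_mul _
  have hπuniv : ∀ x, π x Set.univ = 1 := by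
    intro x
    simp only [hπdef, Measure.smul_apply, Measure.finset_sum_apply, measure_univ,
      Finset.sum_const, nsmul_eq_mul, mul_one, smul_eq_mul]
    exact ENNReal.inv_mul_cancel hk0 hktop
  -- equivariance of π, as an exact identity
  have hπequi : ∀ (γ : Γ) (x : X), π (γ • x) = (π x).map (fun x => γ • x) := by
    intro γ x
    have h1 : (π x).map (fun x => γ • x) = k⁻¹ • ∑ n ∈ sF, Measure.dirac (γ • n • x) := by
      simp only [hπdef]
      rw [← Measure.mapₗ_apply_of_measurable (hmeas γ)]
      rw [LinearMap.map_smul, map_sum]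
      congr 1
      exact Finset.sum_congr rfl fun n _ => by
        rw [Measure.mapₗ_apply_of_measurable (hmeas γ), Measure.map_dirac' (hmeas γ)]
    rw [h1]
    simp only [hπdef]
    congr 1
    refine Finset.sum_nbij' (fun n => γ⁻¹ * n * γ) (fun n => γ * n * γ⁻¹) ?_ ?_ ?_ ?_ ?_
    · intro n hn
      rw [hmem] at hn ⊢
      simpa using hN.conj_mem n hn γ⁻¹
    · intro n hn
      rw [hmem] at hn ⊢
      exact hN.conj_mem n hn γ
    · intro n _; group
    · intro n _; group
    · intro n _
      congr 1
      rw [smul_smul, smul_smul]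
      congr 1
      group
  -- invariance of π under n₀
  have hπinv : ∀ x, π (n₀ • x) = π x := by
    intro x
    simp only [hπdef]
    congr 1
    refine Finset.sum_nbij' (fun n => n * n₀) (fun n => n * n₀⁻¹) ?_ ?_ ?_ ?_ ?_
    · intro n hn
      rw [hmem] at hn ⊢
      exact N.mul_mem hn hn₀N
    · intro n hn
      rw [hmem] at hn ⊢
      exact N.mul_mem hn (N.inv_mem hn₀N)
    · intro n _; group
    · intro n _; group
    · intro n _
      simp [smul_smul]
  set ν : Measure (Measure X) := μ.map π with hν
  haveI hνprob : IsProbabilityMeasure ν := Measure.isProbabilityMeasure_map hπmeas.aemeasurable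
  have hsmul : ∀ (γ : Γ) (m : Measure X), msmul γ m = m.map (fun x => γ • x) :=
    fun γ m => msmul_eq hmeas γ m
  -- measure-preservation of the action on ν
  have hνmp : ∀ γ : Γ, MeasurePreserving (fun m => msmul γ m) ν ν := by
    intro γ
    have hm : Measurable fun m : Measure X => msmul γ m := by
      have h : (fun m : Measure X => msmul γ m) = fun m => m.map (fun x => γ • x) := by
        funext m; exact hsmul γ m
      rw [h]
      exact Measure.measurable_map _ (hmeas γ)
    refine ⟨hm, ?_⟩
    have h : (fun m : Measure X => msmul γ m) ∘ π = π ∘ (fun x => γ • x) := by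
      funext x
      simp only [Function.comp_apply, hsmul, hπequi]
    rw [hν, Measure.map_map hm hπmeas, h, ← Measure.map_map hπmeas (hmeas γ),
      (hmp γ).map_eq]
  -- ν gives full mass to the fixed points of n₀
  have hfix : ν {m : Measure X | msmul n₀ m = m} = 1 := by
    refine le_antisymm prob_le_one ?_
    have h : π ⁻¹' {m : Measure X | msmul n₀ m = m} = Set.univ := by
      ext x
      simp only [Set.mem_preimage, Set.mem_setOf_eq, Set.mem_univ, iff_true]
      rw [hsmul, ← hπequi, hπinv]
    calc (1 : ℝ≥0∞) = μ (π ⁻¹' {m : Measure X | msmul n₀ m = m}) := by rw [h]; simp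
      _ ≤ ν {m : Measure X | msmul n₀ m = m} :=
        Measure.le_map_apply hπmeas.aemeasurable _
  by_cases hdirac : ∃ y, ν = Measure.dirac y
  · -- degenerate case: the factor is a point mass; then μ is finitely supported
    obtain ⟨y, hy⟩ := hdirac
    -- barycenter computation: μ = y
    have hbary : ∀ A : Set X, MeasurableSet A → μ A = y A := by
      intro A hA
      have h2 : ∫⁻ x, π x A ∂μ = y A := by
        have hh := lintegral_map (μ := μ) (Measure.measurable_coe hA) hπmeas
        rw [← hν, hy, lintegral_dirac' y (Measure.measurable_coe hA)] at hh
        exact hh.symm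
      have h3 : ∫⁻ x, π x A ∂μ = μ A := by
        have he : (fun x => π x A) =
            fun x => k⁻¹ * ∑ n ∈ sF, A.indicator (1 : X → ℝ≥0∞) (n • x) := by
          funext x; exact hπapp x A hA
        have hmi : ∀ n : Γ, Measurable fun x : X => A.indicator (1 : X → ℝ≥0∞) (n • x) :=
          fun n => (measurable_one.indicator hA).comp (hmeas n)
        rw [he, lintegral_const_mul' _ _ (by simp [hk0] : k⁻¹ ≠ ⊤),
          lintegral_finset_sum sF (fun n _ => hmi n)]
        have hterm : ∀ n ∈ sF, ∫⁻ x, A.indicator (1 : X → ℝ≥0∞) (n • x) ∂μ = μ A := by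
          intro n _
          have hh := lintegral_map (μ := μ) (measurable_one.indicator hA) (hmeas n)
          rw [(hmp n).map_eq, lintegral_indicator_one hA] at hh
          exact hh.symm
        rw [Finset.sum_congr rfl hterm, Finset.sum_const, nsmul_eq_mul, ← mul_assoc,
          ENNReal.inv_mul_cancel hk0 hktop, one_mul]
      rw [← h3, h2]
    have hμy : μ = y := Measure.ext fun A hA => hbary A hA
    -- for each measurable set, π x A = y A for a.e. x
    have haeB : ∀ A : Set X, MeasurableSet A → ∀ᵐ x ∂μ, π x A = y A := by
      intro A hA
      have hGmeas : Measurable fun x => π x A := (Measure.measurable_coe hA).comp hπmeas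
      have hmapG : μ.map (fun x => π x A) = Measure.dirac (y A) := by
        rw [show (fun x => π x A) = (fun m : Measure X => m A) ∘ π from rfl,
          ← Measure.map_map (Measure.measurable_coe hA) hπmeas, ← hν, hy,
          Measure.map_dirac' (Measure.measurable_coe hA)]
      have hz : μ ((fun x => π x A) ⁻¹' {y A}ᶜ) = 0 := by
        rw [← Measure.map_apply hGmeas (measurableSet_singleton _).compl, hmapG]
        simp
      rw [ae_iff]
      have hset : {x | ¬ π x A = y A} = (fun x => π x A) ⁻¹' {y A}ᶜ := by
        ext x; simp
      rw [hset]
      exact hz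
    -- find a specific point x₀ whose orbit measure is y
    obtain ⟨f, hf⟩ := exists_measurableEmbedding_real X
    have haeQ : ∀ᵐ x ∂μ, ∀ q : ℚ,
        π x (f ⁻¹' Set.Iic (q : ℝ)) = y (f ⁻¹' Set.Iic (q : ℝ)) :=
      ae_all_iff.2 fun q => haeB _ (hf.measurable measurableSet_Iic)
    haveI : NeZero μ := ⟨IsProbabilityMeasure.ne_zero μ⟩
    obtain ⟨x₀, hx₀⟩ := haeQ.exists
    have hyπ : π x₀ = y := by
      haveI : IsProbabilityMeasure (π x₀) := ⟨hπuniv x₀⟩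
      haveI : IsProbabilityMeasure y := hμy ▸ inferInstance
      have hmapeq : (π x₀).map f = y.map f := by
        refine ext_of_generate_finite (⋃ q : ℚ, {Set.Iic (q : ℝ)})
          ?_ Real.isPiSystem_Iic_rat ?_ ?_
        · exact BorelSpace.measurable_eq.trans Real.borel_eq_generateFrom_Iic_rat
        · intro s hs
          simp only [Set.mem_iUnion, Set.mem_singleton_iff] at hs
          obtain ⟨q, rfl⟩ := hs
          rw [Measure.map_apply hf.measurable measurableSet_Iic,
            Measure.map_apply hf.measurable measurableSet_Iic]
          exact hx₀ q
        · haveI : IsProbabilityMeasure ((π x₀).map f) :=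
            Measure.isProbabilityMeasure_map hf.measurable.aemeasurable
          haveI : IsProbabilityMeasure (y.map f) :=
            Measure.isProbabilityMeasure_map hf.measurable.aemeasurable
          simp [measure_univ]
      ext A hA
      calc π x₀ A = (π x₀).map f (f '' A) := by
            rw [hf.map_apply, Set.preimage_image_eq A hf.injective]
        _ = y.map f (f '' A) := by rw [hmapeq]
        _ = y A := by rw [hf.map_apply, Set.preimage_image_eq A hf.injective]
    have hμπ : μ = π x₀ := hμy.trans hyπ.symm
    -- μ is supported on the finite orbit F of x₀
    set F : Set X := (fun n => n • x₀) '' (sF : Set Γ) with hF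
    have hFfin : F.Finite := sF.finite_toSet.image _
    have hFc : μ Fᶜ = 0 := by
      rw [hμπ, hπapp x₀ Fᶜ hFfin.measurableSet.compl]
      have h : ∀ n ∈ sF, Fᶜ.indicator (1 : X → ℝ≥0∞) (n • x₀) = 0 := by
        intro n hn
        apply Set.indicator_of_notMem
        rw [Set.notMem_compl_iff, hF]
        exact ⟨n, by simpa using hn, rfl⟩
      rw [Finset.sum_congr rfl h]
      simp
    -- the set of atoms of μ
    set F' : Set X := {x | μ {x} ≠ 0} with hF'
    have hF'sub : F' ⊆ F := by
      intro x hx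
      by_contra hxF
      exact hx (measure_mono_null (Set.singleton_subset_iff.2 hxF) hFc)
    have hF'fin : F'.Finite := hFfin.subset hF'sub
    have hF'meas : MeasurableSet F' := hF'fin.measurableSet
    have hF'c : μ F'ᶜ = 0 := by
      have hsplit : F'ᶜ ⊆ Fᶜ ∪ (F \ F') := by
        intro x hx
        by_cases hxF : x ∈ F
        · exact Or.inr ⟨hxF, hx⟩
        · exact Or.inl hxF
      refine measure_mono_null hsplit (measure_union_null hFc ?_)
      have hd : F \ F' = ⋃ x ∈ F \ F', ({x} : Set X) := (Set.biUnion_of_singleton _).symm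
      rw [hd]
      refine (measure_biUnion_null_iff ((hFfin.diff (t := F')).countable)).2 ?_
      intro x hx
      by_contra hc
      exact hx.2 hc
    have hμF' : μ F' = 1 := (prob_compl_eq_zero_iff hF'meas).1 hF'c
    -- atoms are permuted by the action
    have hinvF' : ∀ (γ : Γ) (x : X), x ∈ F' → γ • x ∈ F' := by
      intro γ x hx
      have hpre : (fun x : X => γ • x) ⁻¹' {γ • x} = {x} := by
        ext z
        simp only [Set.mem_preimage, Set.mem_singleton_iff]
        exact smul_left_cancel_iff γ
      have h : μ {γ • x} = μ {x} := by
        have := (hmp γ).measure_preimage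
          (measurableSet_singleton (γ • x)).nullMeasurableSet
        rw [hpre] at this
        exact this.symm
      simpa only [hF', Set.mem_setOf_eq, h] using hx
    -- pigeonhole: some nontrivial γ fixes all atoms
    haveI : Finite F' := hF'fin.to_subtype
    obtain ⟨γ₁, γ₂, hne, hΦ⟩ := Finite.exists_ne_map_eq_of_infinite
      (fun γ : Γ => (fun a : F' => (⟨γ • (a : X), hinvF' γ a a.2⟩ : F')))
    set γ := γ₁⁻¹ * γ₂ with hγdef
    have hγ1 : γ ≠ 1 := by
      simp only [hγdef, Ne, inv_mul_eq_one]
      exact fun h => hne h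
    have hfixF' : ∀ x ∈ F', γ • x = x := by
      intro x hx
      have h12 : γ₁ • x = γ₂ • x := congrArg Subtype.val (congrFun hΦ ⟨x, hx⟩)
      rw [hγdef, mul_smul, ← h12, ← mul_smul, inv_mul_cancel, one_smul]
    have hge : (1 : ℝ≥0∞) ≤ μ {x | γ • x = x} := by
      rw [← hμF']
      exact measure_mono fun x hx => hfixF' x hx
    exact absurd (hId γ hγ1) (not_lt.2 hge)
  · -- non-degenerate case: apply the faithfulness hypothesis to the factor ν
    push_neg at hdirac
    letI : MulAction Γ (Measure X) := measureMulAction Γ X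
    have hlt := hfactors (Measure X) ν hνprob hνmp π hπmeas hν.symm
      (fun γ => Filter.Eventually.of_forall fun x => (hπequi γ x).trans (hsmul γ (π x)).symm)
      hdirac n₀ hn₀
    exact absurd hlt (not_lt.2 (le_of_eq hfix.symm))
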